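/- arXiv:1703.04698 — 2 statements merged into one kernel-verified Lean document; each statement's English description precedes it below -/
import Mathlib

section
/- If the real 3×3 symmetric matrix B is negative definite and for every unit vector q with ⟨q,b⟩ > 0 the quantity −⟨q,b⟩/⟨q,Bq⟩ is at most 1, then the closed unit ball in ℝ³ is invariant under the flow of dq/dt = b + Bq + u(t) × q: if ‖q(0)‖ ≤ 1 then ‖q(t)‖ ≤ 1 for all t ≥ 0. -/
open Matrix

/-- The key dissipativity estimate: outside the open unit ball,
`⟨x, b⟩ + ⟨x, Bx⟩ ≤ 0`. -/
lemma key_estimate (b : Fin 3 → ℝ) (B : Matrix (Fin 3) (Fin 3) ℝ)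
    (hBneg : (-B).PosDef)
    (hchimney : ∀ q : Fin 3 → ℝ, (∑ i, q i ^ 2) = 1 → 0 < ∑ i, q i * b i →
      -(∑ i, q i * b i) / (∑ i, q i * B.mulVec q i) ≤ 1)
    (x : Fin 3 → ℝ) (hx : 1 ≤ ∑ i, x i ^ 2) :
    (∑ i, x i * b i) + (∑ i, x i * B.mulVec x i) ≤ 0 := by
  have hx0 : x ≠ 0 := by
    intro h
    rw [h] at hx
    simp at hx
    linarith
  have hQpos : 0 < x ⬝ᵥ (-B).mulVec x := hBneg.dotProduct_mulVec_pos hx0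
  have hQ : (∑ i, x i * B.mulVec x i) < 0 := by
    have : x ⬝ᵥ (-B).mulVec x = -(∑ i, x i * B.mulVec x i) := by
      simp [dotProduct, Matrix.neg_mulVec, Finset.sum_neg_distrib, mul_neg]
    rw [this] at hQpos
    linarith
  set P := ∑ i, x i * b i with hPdef
  set Q := ∑ i, x i * B.mulVec x i with hQdef
  rcases le_or_gt P 0 with hP | hP
  · linarith
  · -- normalize x
    set r := Real.sqrt (∑ i, x i ^ 2) with hrdef
    have hr2 : r ^ 2 = ∑ i, x i ^ 2 := Real.sq_sqrt (by positivity)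
    have hr1 : 1 ≤ r := by
      nlinarith [Real.sqrt_nonneg (∑ i, x i ^ 2)]
    have hrpos : 0 < r := by linarith
    set e : Fin 3 → ℝ := r⁻¹ • x with hedef
    have he1 : (∑ i, e i ^ 2) = 1 := by
      simp only [hedef, Pi.smul_apply, smul_eq_mul, mul_pow, ← Finset.mul_sum]
      rw [← hr2]
      field_simp
    have heB : B.mulVec e = r⁻¹ • B.mulVec x := by
      simp [hedef, Matrix.mulVec_smul]
    have heb : (∑ i, e i * b i) = r⁻¹ * P := by
      simp only [hedef, Pi.smul_apply, smul_eq_mul, hPdef, Finset.mul_sum, mul_assoc]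
    have hebpos : 0 < ∑ i, e i * b i := by
      rw [heb]; positivity
    have heQ : (∑ i, e i * B.mulVec e i) = r⁻¹ * r⁻¹ * Q := by
      rw [heB]
      simp only [hedef, Pi.smul_apply, smul_eq_mul, hQdef, Finset.mul_sum]
      apply Finset.sum_congr rfl
      intro i _
      ring
    have hchim := hchimney e he1 hebpos
    rw [heb, heQ] at hchim
    have heQneg : r⁻¹ * r⁻¹ * Q < 0 := by
      have h : (0:ℝ) < r⁻¹ * r⁻¹ := by positivity
      exact mul_neg_of_pos_of_neg h hQ
    have h2 : 1 * (r⁻¹ * r⁻¹ * Q) ≤ -(r⁻¹ * P) := (div_le_iff_of_neg heQneg).mp hchim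
    -- so r⁻¹ * Q ≤ -P, i.e. P ≤ -r⁻¹ * Q
    have hrinv : r⁻¹ ≤ 1 := by
      rw [inv_le_one_iff₀]; right; exact hr1
    have hrinvpos : 0 < r⁻¹ := by positivity
    -- from h2: r⁻¹ * r⁻¹ * Q ≤ - r⁻¹ * P ⇒ r⁻¹ * Q ≤ -P (divide by r⁻¹ > 0)
    have h3 : r⁻¹ * Q ≤ -P := by
      nlinarith
    -- P + Q ≤ -r⁻¹ Q + Q = Q (1 - r⁻¹) ≤ 0
    nlinarith

/-- Invariance of the closed unit ball for the Bloch equation q' = b + Bq + u×q. -/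
theorem unit_ball_invariant (b : Fin 3 → ℝ) (B : Matrix (Fin 3) (Fin 3) ℝ)
    (hBsymm : B.IsSymm) (hBneg : (-B).PosDef)
    (hchimney : ∀ q : Fin 3 → ℝ, (∑ i, q i ^ 2) = 1 → 0 < ∑ i, q i * b i →
      -(∑ i, q i * b i) / (∑ i, q i * B.mulVec q i) ≤ 1)
    (u : ℝ → Fin 3 → ℝ) (hu : Continuous u)
    (q : ℝ → Fin 3 → ℝ)
    (hq : ∀ t, HasDerivAt q (b + B.mulVec (q t) + crossProduct (u t) (q t)) t)
    (h0 : ∑ i, q 0 i ^ 2 ≤ 1) :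
    ∀ t ≥ (0 : ℝ), ∑ i, q t i ^ 2 ≤ 1 := by
  set f : ℝ → ℝ := fun t => ∑ i, q t i ^ 2 with hfdef
  -- derivative of f
  have hf' : ∀ t, HasDerivAt f
      (2 * ((∑ i, q t i * b i) + (∑ i, q t i * B.mulVec (q t) i))) t := by
    intro t
    set v : Fin 3 → ℝ := b + B.mulVec (q t) + crossProduct (u t) (q t) with hvdef
    have hcomp : ∀ i, HasDerivAt (fun s => q s i) (v i) t :=
      hasDerivAt_pi.mp (hq t)
    have hsum : HasDerivAt f (∑ i, 2 * q t i * v i) t := by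
      apply HasDerivAt.fun_sum
      intro i _
      have := (hcomp i).fun_pow 2
      simpa [mul_comm, mul_assoc, mul_left_comm] using this
    have hcross : (∑ i, q t i * (crossProduct (u t) (q t)) i) = 0 := by
      simp [crossProduct, Fin.sum_univ_three]
      ring
    have : (∑ i, 2 * q t i * v i)
        = 2 * ((∑ i, q t i * b i) + (∑ i, q t i * B.mulVec (q t) i)) := by
      have expand : ∀ i : Fin 3, 2 * q t i * v i
          = 2 * (q t i * b i) + 2 * (q t i * B.mulVec (q t) i)
            + 2 * (q t i * (crossProduct (u t) (q t)) i) := by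
        intro i
        simp only [hvdef, Pi.add_apply]
        ring
      rw [Finset.sum_congr rfl (fun i _ => expand i), Finset.sum_add_distrib,
        Finset.sum_add_distrib, ← Finset.mul_sum, ← Finset.mul_sum, ← Finset.mul_sum, hcross]
      ring
    rwa [this] at hsum
  have hfdiff : Differentiable ℝ f := fun t => (hf' t).differentiableAt
  have hfderiv : ∀ t, 1 ≤ f t → deriv f t ≤ 0 := by
    intro t ht
    rw [(hf' t).deriv]
    have := key_estimate b B hBneg hchimney (q t) ht
    linarith
  -- main argument
  intro t₁ ht₁
  by_contra hcon
  push_neg at hcon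
  set S : Set ℝ := {t | t ∈ Set.Icc (0:ℝ) t₁ ∧ f t ≤ 1} with hSdef
  have hS0 : (0:ℝ) ∈ S := ⟨⟨le_refl 0, ht₁⟩, h0⟩
  have hSne : S.Nonempty := ⟨0, hS0⟩
  have hSbdd : BddAbove S := ⟨t₁, fun x hx => hx.1.2⟩
  set s := sSup S with hsdef
  have hs_mem_cl : s ∈ closure S := csSup_mem_closure hSne hSbdd
  have hSclosed : IsClosed ({t | t ∈ Set.Icc (0:ℝ) t₁ ∧ f t ≤ 1}) := by
    apply IsClosed.inter isClosed_Icc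
    exact isClosed_le hfdiff.continuous continuous_const
  have hs_mem : s ∈ S := by
    have : closure S ⊆ S := hSclosed.closure_subset
    exact this hs_mem_cl
  have hfs : f s ≤ 1 := hs_mem.2
  have hs_le : s ≤ t₁ := hs_mem.1.2
  have hs_ne : s ≠ t₁ := by
    intro h
    rw [h] at hfs
    linarith
  have hs_lt : s < t₁ := lt_of_le_of_ne hs_le hs_ne
  have hs_nonneg : 0 ≤ s := hs_mem.1.1
  -- on (s, t₁), f > 1
  have hopen : ∀ x ∈ Set.Ioo s t₁, 1 < f x := by
    intro x hx
    by_contra hfx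
    push_neg at hfx
    have : x ∈ S := ⟨⟨le_trans hs_nonneg hx.1.le, hx.2.le⟩, hfx⟩
    have : x ≤ s := le_csSup hSbdd this
    exact absurd hx.1 (not_lt.mpr this)
  have hanti : AntitoneOn f (Set.Icc s t₁) := by
    apply antitoneOn_of_deriv_nonpos (convex_Icc s t₁)
      hfdiff.continuous.continuousOn
      (hfdiff.differentiableOn)
    intro x hx
    rw [interior_Icc] at hx
    exact hfderiv x (hopen x hx).le
  have : f t₁ ≤ f s := hanti ⟨le_refl s, hs_le⟩ ⟨hs_le, le_refl t₁⟩ hs_le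
  linarith
end

section
/- Let f(q) = ⟨q, b + Bq⟩ with B symmetric negative definite and b ≠ 0. Any maximizer q_apogee of ‖q‖ over the ellipsoid M = {q ≠ 0 : f(q) = 0} satisfies ‖q_apogee‖ = max over unit vectors v of (−⟨v,b⟩/⟨v,Bv⟩), and this maximum is positive. -/
open Matrix

/-- A maximizer of the norm over the ellipsoid M = {q ≠ 0 : f(q) = 0} has norm
equal to the maximum over unit vectors v of −⟨v,b⟩/⟨v,Bv⟩, and this is positive. -/
theorem apogee_norm (b : Fin 3 → ℝ) (hb : b ≠ 0)
    (B : Matrix (Fin 3) (Fin 3) ℝ) (hBsymm : B.IsSymm) (hBneg : (-B).PosDef)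
    (M : Set (Fin 3 → ℝ))
    (hM : M = {q | q ≠ 0 ∧ ∑ i, q i * (b + B.mulVec q) i = 0})
    (qa : Fin 3 → ℝ) (hqaM : qa ∈ M)
    (hqamax : ∀ q ∈ M, Real.sqrt (∑ i, q i ^ 2) ≤ Real.sqrt (∑ i, qa i ^ 2)) :
    IsGreatest {r : ℝ | ∃ v : Fin 3 → ℝ, (∑ i, v i ^ 2) = 1 ∧
        r = -(∑ i, v i * b i) / (∑ i, v i * B.mulVec v i)}
      (Real.sqrt (∑ i, qa i ^ 2)) ∧
    0 < Real.sqrt (∑ i, qa i ^ 2) := by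
  subst hM
  obtain ⟨hqa0, hqaf⟩ := hqaM
  have hneg : ∀ v : Fin 3 → ℝ, v ≠ 0 → ∑ i, v i * B.mulVec v i < 0 := by
    intro v hv
    have h := hBneg.dotProduct_mulVec_pos hv
    simp only [star_trivial, RCLike.re_to_real, neg_mulVec, dotProduct, Pi.neg_apply,
      mul_neg, Finset.sum_neg_distrib] at h
    linarith
  -- positivity of the squared norm
  have hSqpos : 0 < ∑ i, qa i ^ 2 := by
    rcases Function.ne_iff.mp hqa0 with ⟨i, hi⟩
    have hi' : qa i ≠ 0 := by simpa using hi
    have : 0 < qa i ^ 2 := by positivity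
    have hle : ∀ j ∈ Finset.univ, 0 ≤ qa j ^ 2 := fun j _ => sq_nonneg _
    exact Finset.sum_pos' hle ⟨i, Finset.mem_univ i, this⟩
  have hnpos : 0 < Real.sqrt (∑ i, qa i ^ 2) := Real.sqrt_pos.mpr hSqpos
  set n := Real.sqrt (∑ i, qa i ^ 2) with hn
  have hn2 : n ^ 2 = ∑ i, qa i ^ 2 := Real.sq_sqrt hSqpos.le
  have hnne : n ≠ 0 := ne_of_gt hnpos
  -- split f(qa) = 0 into A + D = 0
  have hAD : (∑ i, qa i * b i) + (∑ i, qa i * B.mulVec qa i) = 0 := by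
    rw [← Finset.sum_add_distrib]
    rw [← hqaf]
    apply Finset.sum_congr rfl
    intro i _
    simp [Pi.add_apply, mul_add]
  have hD : (∑ i, qa i * B.mulVec qa i) < 0 := hneg qa hqa0
  refine ⟨⟨?_, ?_⟩, hnpos⟩
  · -- membership: v = n⁻¹ • qa
    refine ⟨n⁻¹ • qa, ?_, ?_⟩
    · have : ∑ i, (n⁻¹ • qa) i ^ 2 = n⁻¹ ^ 2 * ∑ i, qa i ^ 2 := by
        rw [Finset.mul_sum]
        apply Finset.sum_congr rfl
        intro i _
        simp [Pi.smul_apply, mul_pow]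
      rw [this, ← hn2]
      field_simp
    · have h1 : ∑ i, (n⁻¹ • qa) i * b i = n⁻¹ * ∑ i, qa i * b i := by
        rw [Finset.mul_sum]
        apply Finset.sum_congr rfl
        intro i _
        simp [Pi.smul_apply]; ring
      have h2 : ∑ i, (n⁻¹ • qa) i * B.mulVec (n⁻¹ • qa) i
          = n⁻¹ ^ 2 * ∑ i, qa i * B.mulVec qa i := by
        rw [Matrix.mulVec_smul, Finset.mul_sum]
        apply Finset.sum_congr rfl
        intro i _
        simp [Pi.smul_apply]; ring
      rw [h1, h2]
      have hA : (∑ i, qa i * b i) = -(∑ i, qa i * B.mulVec qa i) := by linarith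
      rw [hA]
      have hDne : (∑ i, qa i * B.mulVec qa i) ≠ 0 := ne_of_lt hD
      field_simp
  · -- upper bound
    rintro r ⟨v, hv1, hr⟩
    have hv0 : v ≠ 0 := by
      intro h
      rw [h] at hv1
      simp at hv1
    have hDv : (∑ i, v i * B.mulVec v i) < 0 := hneg v hv0
    by_cases hA : (∑ i, v i * b i) ≤ 0
    · have : r ≤ 0 := by
        rw [hr]
        apply div_nonpos_of_nonneg_of_nonpos <;> linarith
      linarith
    · push_neg at hA
      have hrpos : 0 < r := by
        rw [hr]
        apply div_pos_of_neg_of_neg <;> linarith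
      have hrD : r * (∑ i, v i * B.mulVec v i) = -(∑ i, v i * b i) := by
        rw [hr]; exact div_mul_cancel₀ _ (ne_of_lt hDv)
      -- q = r • v is in M
      have hqM : (r • v) ∈ {q : Fin 3 → ℝ | q ≠ 0 ∧ ∑ i, q i * (b + B.mulVec q) i = 0} := by
        constructor
        · exact smul_ne_zero (ne_of_gt hrpos) hv0
        · have hterm : ∀ i ∈ Finset.univ, (r • v) i * (b + B.mulVec (r • v)) i
              = r * (v i * b i) + r * r * (v i * B.mulVec v i) := by
            intro i _
            simp only [Matrix.mulVec_smul, Pi.add_apply, Pi.smul_apply, smul_eq_mul]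
            ring
          rw [Finset.sum_congr rfl hterm, Finset.sum_add_distrib, ← Finset.mul_sum,
            ← Finset.mul_sum]
          linear_combination r * hrD
      have hle := hqamax (r • v) hqM
      have hsq : ∑ i, (r • v) i ^ 2 = r ^ 2 := by
        have : ∑ i, (r • v) i ^ 2 = r ^ 2 * ∑ i, v i ^ 2 := by
          rw [Finset.mul_sum]
          apply Finset.sum_congr rfl
          intro i _
          simp [Pi.smul_apply, mul_pow]
        rw [this, hv1, mul_one]
      rw [hsq] at hle
      rwa [Real.sqrt_sq hrpos.le] at hle
end
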